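/- Let a > 0. There exist constants 0 < c ≤ C < ∞, depending only on a and the dimension n, such that whenever an admissible ball B(x,r) ∈ 𝓑_a has non-empty intersection with a cube Q ∈ Δ^γ_0 with centre c_Q, then for every y ∈ B(x,r) one has c·exp(-|c_Q|²/2) ≤ exp(-|y|²/2) ≤ C·exp(-|c_Q|²/2). -/

import Mathlib

open MeasureTheory Metric Set
open scoped ENNReal NNReal BigOperators

noncomputable section

/-- The gaussian measure `dγ(x) = (2π)^{-n/2} exp(-|x|²/2) dx` on `ℝⁿ`. -/
def gaussMeasure (n : ℕ) : Measure (EuclideanSpace ℝ (Fin n)) :=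
  volume.withDensity fun x =>
    ENNReal.ofReal ((2 * Real.pi) ^ (-(n : ℝ) / 2) * Real.exp (-‖x‖ ^ 2 / 2))

/-- `m(x) = min {1, 1/‖x‖}`. -/
def mfun {n : ℕ} (x : EuclideanSpace ℝ (Fin n)) : ℝ :=
  if ‖x‖ ≤ 1 then 1 else ‖x‖⁻¹

/-- Ornstein–Uhlenbeck (Mehler) semigroup `e^{-tL} u (x)`. -/
def mehler (n : ℕ) (u : EuclideanSpace ℝ (Fin n) → ℝ) (t : ℝ)
    (x : EuclideanSpace ℝ (Fin n)) : ℝ :=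
  ∫ y, u (Real.exp (-t) • x + Real.sqrt (1 - Real.exp (-2 * t)) • y) ∂gaussMeasure n

/-- The gaussian conical square function `S_a u (x)`. -/
def Sfun (n : ℕ) (a : ℝ) (u : EuclideanSpace ℝ (Fin n) → ℝ)
    (x : EuclideanSpace ℝ (Fin n)) : ℝ≥0∞ :=
  (∫⁻ t in Set.Ioo (0 : ℝ) (a * mfun x),
      (∫⁻ y in ball x t,
        (gaussMeasure n (ball y t))⁻¹ *
          ENNReal.ofReal ((t * ‖fderiv ℝ (mehler n u (t ^ 2)) y‖) ^ 2) ∂gaussMeasure n) /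
        ENNReal.ofReal t) ^ (1 / 2 : ℝ)

/-- The gaussian non-tangential maximal function `T*_{(A,a)} u (x)`. -/
def Tstar (n : ℕ) (A a : ℝ) (u : EuclideanSpace ℝ (Fin n) → ℝ)
    (x : EuclideanSpace ℝ (Fin n)) : ℝ≥0∞ :=
  ⨆ (y : EuclideanSpace ℝ (Fin n)) (t : ℝ) (_ : dist y x < A * t) (_ : 0 < t)
      (_ : t < a * mfun x),
    ((gaussMeasure n (ball y (A * t)))⁻¹ *
        ∫⁻ z in ball y (A * t), ENNReal.ofReal ((mehler n u (t ^ 2) z) ^ 2) ∂gaussMeasure n) ^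
      (1 / 2 : ℝ)

/-- The admissible (gaussian) Hardy–Littlewood maximal function `M*_a f (x)`. -/
def Mstar (n : ℕ) (a : ℝ) (f : EuclideanSpace ℝ (Fin n) → ℝ)
    (x : EuclideanSpace ℝ (Fin n)) : ℝ≥0∞ :=
  ⨆ (r : ℝ) (_ : 0 < r) (_ : r ≤ a * mfun x),
    (gaussMeasure n (ball x r))⁻¹ *
      ∫⁻ y in ball x r, ENNReal.ofReal |f y| ∂gaussMeasure n

/-- The admissible cone `Γ^{(A,a)}_x(γ)`. -/
def cone (n : ℕ) (A a : ℝ) (x : EuclideanSpace ℝ (Fin n)) :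
    Set (EuclideanSpace ℝ (Fin n) × ℝ) :=
  {p | dist p.1 x < A * p.2 ∧ 0 < p.2 ∧ p.2 < a * mfun x}

/-- The modified admissible cone `Γ̃^{(A,a)}_x(γ)`. -/
def coneT (n : ℕ) (A a : ℝ) (x : EuclideanSpace ℝ (Fin n)) :
    Set (EuclideanSpace ℝ (Fin n) × ℝ) :=
  {p | dist p.1 x < A * p.2 ∧ 0 < p.2 ∧ p.2 < a * mfun p.1}

/-- The dyadic cube `2^{-k}(v + [0,1)ⁿ)` of scale `k`. -/
def dyadicCube (n k : ℕ) (v : Fin n → ℤ) : Set (EuclideanSpace ℝ (Fin n)) :=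
  {x | ∀ i, x i ∈ Set.Ico ((2 : ℝ) ^ (-(k : ℤ)) * v i) ((2 : ℝ) ^ (-(k : ℤ)) * (v i + 1))}

/-- The centre of the dyadic cube `2^{-k}(v + [0,1)ⁿ)`. -/
def cubeCenter (n k : ℕ) (v : Fin n → ℤ) : EuclideanSpace ℝ (Fin n) :=
  WithLp.toLp 2 (fun i => (2 : ℝ) ^ (-(k : ℤ)) * (v i + 1 / 2))

/-- The layers `L_0 = [-1,1)ⁿ`, `L_l = [-2^l,2^l)ⁿ \ [-2^{l-1},2^{l-1})ⁿ`. -/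
def layer (n : ℕ) : ℕ → Set (EuclideanSpace ℝ (Fin n))
  | 0 => {x | ∀ i, x i ∈ Set.Ico (-1 : ℝ) 1}
  | (l + 1) =>
      {x | ∀ i, x i ∈ Set.Ico (-(2 : ℝ) ^ (l + 1)) ((2 : ℝ) ^ (l + 1))} \
        {x | ∀ i, x i ∈ Set.Ico (-(2 : ℝ) ^ l) ((2 : ℝ) ^ l)}

/-- The cube `α ∘ Q` with the same centre as `Q = 2^{-k}(v + [0,1)ⁿ)` and `α` times
its side-length. -/
def scaledCube (n k : ℕ) (v : Fin n → ℤ) (α : ℝ) : Set (EuclideanSpace ℝ (Fin n)) :=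
  {x | ∀ i, x i ∈ Set.Ico (cubeCenter n k v i - α * (2 : ℝ) ^ (-(k : ℤ)) / 2)
      (cubeCenter n k v i + α * (2 : ℝ) ^ (-(k : ℤ)) / 2)}

/-- The Ornstein–Uhlenbeck operator `Lf(x) = -Δf(x) + x·∇f(x)`. -/
def OU (n : ℕ) (f : EuclideanSpace ℝ (Fin n) → ℂ) (x : EuclideanSpace ℝ (Fin n)) : ℂ :=
  -(∑ i : Fin n, iteratedFDeriv ℝ 2 f x ![EuclideanSpace.single i 1, EuclideanSpace.single i 1]) +
    fderiv ℝ f x x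


lemma euclid_norm_le_of_coords {n : ℕ} (w : EuclideanSpace ℝ (Fin n)) (M : ℝ) (hM : 0 ≤ M)
    (h : ∀ i, |w i| ≤ M) : ‖w‖ ≤ Real.sqrt n * M := by
  rw [EuclideanSpace.norm_eq]
  have h1 : ∑ i, ‖w i‖ ^ 2 ≤ (n : ℝ) * M ^ 2 := by
    calc ∑ i, ‖w i‖ ^ 2 ≤ ∑ _i : Fin n, M ^ 2 :=
          Finset.sum_le_sum fun i _ => by
            have h2 := h i
            have h3 := abs_nonneg (w i)
            rw [Real.norm_eq_abs]; nlinarith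
      _ = (n : ℝ) * M ^ 2 := by simp [Finset.sum_const]
  calc Real.sqrt (∑ i, ‖w i‖ ^ 2) ≤ Real.sqrt ((n : ℝ) * M ^ 2) := Real.sqrt_le_sqrt h1
    _ = Real.sqrt n * M := by
        rw [Real.sqrt_mul (Nat.cast_nonneg n), Real.sqrt_sq hM]

lemma euclid_coord_le_norm {n : ℕ} (w : EuclideanSpace ℝ (Fin n)) (i : Fin n) :
    |w i| ≤ ‖w‖ := by
  rw [EuclideanSpace.norm_eq]
  have h1 : |w i| = Real.sqrt (‖w i‖ ^ 2) := by
    rw [Real.norm_eq_abs, Real.sqrt_sq (abs_nonneg _)]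
  rw [h1]
  exact Real.sqrt_le_sqrt (Finset.single_le_sum (f := fun j => ‖w j‖ ^ 2)
    (fun j _ => sq_nonneg _) (Finset.mem_univ i))

lemma mfun_le_one {n : ℕ} (x : EuclideanSpace ℝ (Fin n)) : mfun x ≤ 1 := by
  unfold mfun
  split
  · exact le_refl 1
  · next h =>
      push_neg at h
      exact le_of_lt (by rw [inv_lt_one_iff₀]; right; exact h)

/-- on an admissible ball meeting a cube `Q ∈ Δ^γ_0`, the gaussian density is
comparable to its value at the centre of the cube. -/
theorem gaussian_density_comparable (n : ℕ) (a : ℝ) (ha : 0 < a) :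
    ∃ c > (0 : ℝ), ∃ C > (0 : ℝ), c ≤ C ∧
      ∀ (x : EuclideanSpace ℝ (Fin n)) (r : ℝ) (l : ℕ) (v : Fin n → ℤ),
        0 ≤ r → r ≤ a * mfun x → dyadicCube n l v ⊆ layer n l →
        (ball x r ∩ dyadicCube n l v).Nonempty →
        ∀ y ∈ ball x r,
          c * Real.exp (-‖cubeCenter n l v‖ ^ 2 / 2) ≤ Real.exp (-‖y‖ ^ 2 / 2) ∧
          Real.exp (-‖y‖ ^ 2 / 2) ≤ C * Real.exp (-‖cubeCenter n l v‖ ^ 2 / 2) := by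
  classical
  obtain ⟨s, hs_def⟩ : ∃ s, s = Real.sqrt n := ⟨_, rfl⟩
  have hs : 0 ≤ s := by rw [hs_def]; exact Real.sqrt_nonneg _
  obtain ⟨K₁, hK₁_def⟩ : ∃ t : ℝ, t = a * (4 * a + 2) + 4 * a := ⟨_, rfl⟩
  have hK₁pos : 0 < K₁ := by rw [hK₁_def]; nlinarith
  obtain ⟨K, hK_def⟩ : ∃ t : ℝ, t = ((2 * a + s) ^ 2 + 2 * s * (2 * K₁ + s)) / 2 := ⟨_, rfl⟩
  have hK : 0 ≤ K := by
    have h1 : (0 : ℝ) ≤ (2 * a + s) ^ 2 := sq_nonneg _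
    have h2 : (0 : ℝ) ≤ 2 * s * (2 * K₁ + s) := by
      apply mul_nonneg (by linarith) (by linarith)
    rw [hK_def]; linarith
  refine ⟨Real.exp (-K), Real.exp_pos _, Real.exp K, Real.exp_pos _,
    Real.exp_le_exp.mpr (by linarith), ?_⟩
  rintro x r l v hr hra hQ ⟨z, hzb, hzQ⟩ y hy
  obtain ⟨c, hc_def⟩ : ∃ w, w = cubeCenter n l v := ⟨_, rfl⟩
  obtain ⟨P, hP_def⟩ : ∃ t : ℝ, t = 2 ^ l := ⟨_, rfl⟩
  have hP : (1 : ℝ) ≤ P := by rw [hP_def]; exact one_le_pow₀ (by norm_num)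
  have hPpos : (0 : ℝ) < P := by linarith
  obtain ⟨Pinv, hPinv_def⟩ : ∃ t : ℝ, t = (2 : ℝ) ^ (-(l : ℤ)) := ⟨_, rfl⟩
  have hPinvpos : (0 : ℝ) < Pinv := by rw [hPinv_def]; positivity
  have hPP : P * Pinv = 1 := by
    rw [hP_def, hPinv_def, zpow_neg, zpow_natCast]
    exact mul_inv_cancel₀ (by positivity)
  have hPinv_le : Pinv ≤ 1 := by
    have h1 : 1 * Pinv ≤ P * Pinv := mul_le_mul_of_nonneg_right hP hPinvpos.le
    rw [one_mul, hPP] at h1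
    exact h1
  -- the centre lies in the cube
  have hcQ : c ∈ dyadicCube n l v := by
    intro i
    rw [hc_def]
    unfold cubeCenter
    rw [show ((2 : ℝ) ^ (-(l : ℤ))) = Pinv from hPinv_def.symm]
    constructor
    · have h1 : (v i : ℝ) ≤ (v i : ℝ) + 1 / 2 := by linarith
      exact mul_le_mul_of_nonneg_left h1 (le_of_lt hPinvpos)
    · have h1 : ((v i : ℝ) + 1 / 2) < (v i : ℝ) + 1 := by linarith
      exact mul_lt_mul_of_pos_left h1 hPinvpos
  -- diameter bound inside the cube
  have hzc : ‖z - c‖ ≤ s * Pinv := by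
    rw [hs_def]
    apply euclid_norm_le_of_coords _ _ (le_of_lt hPinvpos)
    intro i
    have h1 := (hzQ i).1
    have h2 := (hzQ i).2
    have h3 := (hcQ i).1
    have h4 := (hcQ i).2
    rw [← hPinv_def] at h1 h2 h3 h4
    have hzi : (z - c) i = z i - c i := rfl
    rw [hzi, abs_le]
    have e1 : Pinv * ((v i : ℝ) + 1) = Pinv * (v i : ℝ) + Pinv := by ring
    rw [e1] at h2 h4
    constructor <;> linarith
  -- layer bounds
  have hzL : z ∈ layer n l := hQ hzQ
  have hcL : c ∈ layer n l := hQ hcQ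
  have hcnorm : ‖c‖ ≤ s * P := by
    rw [hs_def]
    apply euclid_norm_le_of_coords _ _ (le_of_lt hPpos)
    intro i
    cases l with
    | zero =>
        have h1 := hcL i
        rw [mem_Ico] at h1
        rw [abs_le]
        simp only [hP_def, pow_zero]
        exact ⟨by linarith [h1.1], by linarith [h1.2]⟩
    | succ l' =>
        have h1 := hcL.1 i
        rw [mem_Ico] at h1
        rw [abs_le]
        rw [hP_def]
        exact ⟨by linarith [h1.1], by linarith [h1.2]⟩
  -- r ≤ a
  have hrm : r ≤ a := by
    have h1 : a * mfun x ≤ a * 1 := mul_le_mul_of_nonneg_left (mfun_le_one x) ha.le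
    rw [mul_one] at h1
    linarith
  -- the key scale bound : P * r ≤ K₁
  have hPr : P * r ≤ K₁ := by
    cases l with
    | zero =>
        have h0 : P = 1 := by rw [hP_def, pow_zero]
        rw [h0, one_mul]
        have h1 : 0 ≤ a * (4 * a + 2) := by positivity
        rw [hK₁_def]; linarith
    | succ l' =>
        obtain ⟨Q2, hQ2_def⟩ : ∃ t : ℝ, t = 2 ^ l' := ⟨_, rfl⟩
        have hQ2pos : (0 : ℝ) < Q2 := by rw [hQ2_def]; positivity
        have hPQ : P = 2 * Q2 := by rw [hP_def, hQ2_def, pow_succ]; ring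
        -- lower bound on ‖z‖
        have hz2 : Q2 ≤ ‖z‖ := by
          have h2 := hzL.2
          simp only [mem_setOf_eq, not_forall] at h2
          obtain ⟨i, hi⟩ := h2
          rw [mem_Ico, not_and_or, not_le, not_lt] at hi
          have habs : Q2 ≤ |z i| := by
            rcases hi with hi | hi
            · rw [abs_of_neg (by linarith)]; linarith
            · rw [abs_of_nonneg (by linarith)]; linarith
          exact habs.trans (euclid_coord_le_norm z i)
        by_cases hcase : Q2 ≤ 2 * a + 1
        · have h8 : P ≤ 4 * a + 2 := by rw [hPQ]; linarith
          have h9 : P * r ≤ (4 * a + 2) * a := mul_le_mul h8 hrm hr (by linarith)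
          have e : (4 * a + 2) * a = a * (4 * a + 2) := by ring
          rw [e] at h9
          rw [hK₁_def]; linarith
        · push_neg at hcase
          have hzx : dist z x < r := mem_ball.mp hzb
          have hxz : ‖z‖ - r ≤ ‖x‖ := by
            have e : x + (z - x) = z := by abel
            have h5 : ‖z‖ ≤ ‖x‖ + dist z x := by
              rw [dist_eq_norm]
              calc ‖z‖ = ‖x + (z - x)‖ := by rw [e]
                _ ≤ ‖x‖ + ‖z - x‖ := norm_add_le _ _
            linarith
          have hx1 : 1 < ‖x‖ := by linarith
          have hm : mfun x = ‖x‖⁻¹ := by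
            unfold mfun; rw [if_neg (not_le.mpr hx1)]
          have hxpos : (0 : ℝ) < ‖x‖ := by linarith
          have hra' : r * ‖x‖ ≤ a := by
            rw [hm] at hra
            calc r * ‖x‖ ≤ a * ‖x‖⁻¹ * ‖x‖ :=
                  mul_le_mul_of_nonneg_right hra (le_of_lt hxpos)
              _ = a := by field_simp
          have h5 : r * (Q2 - r) ≤ a := by
            have h5a : r * (Q2 - r) ≤ r * ‖x‖ :=
              mul_le_mul_of_nonneg_left (by linarith) hr
            linarith
          have h6 : r < 1 := by
            by_contra hcon
            push_neg at hcon
            have h6a : r * (a + 1) ≤ r * (Q2 - r) :=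
              mul_le_mul_of_nonneg_left (by linarith) hr
            have h6b : 1 * (a + 1) ≤ r * (a + 1) :=
              mul_le_mul_of_nonneg_right hcon (by linarith)
            rw [one_mul] at h6b
            linarith
          have h7 : Q2 * r ≤ 2 * a := by
            have e : Q2 * r = r * (Q2 - r) + r * r := by ring
            have h7a : r * r ≤ r * 1 := mul_le_mul_of_nonneg_left h6.le hr
            rw [mul_one] at h7a
            rw [e]; linarith
          have e2 : P * r = 2 * (Q2 * r) := by rw [hPQ]; ring
          rw [e2, hK₁_def]
          have h10 : 0 ≤ a * (4 * a + 2) := by positivity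
          linarith
  -- distance bounds
  have hyx : dist y x < r := mem_ball.mp hy
  have hxz2 : dist x z < r := by rw [dist_comm]; exact mem_ball.mp hzb
  have hD : ‖y - c‖ ≤ 2 * r + s * Pinv := by
    have e : (y - x) + (x - z) + (z - c) = y - c := by abel
    have h1 : ‖y - c‖ ≤ ‖y - x‖ + ‖x - z‖ + ‖z - c‖ := by
      calc ‖y - c‖ = ‖(y - x) + (x - z) + (z - c)‖ := by rw [e]
        _ ≤ ‖(y - x) + (x - z)‖ + ‖z - c‖ := norm_add_le _ _
        _ ≤ ‖y - x‖ + ‖x - z‖ + ‖z - c‖ := by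
            have h2 := norm_add_le (y - x) (x - z); linarith
    rw [dist_eq_norm] at hyx hxz2
    linarith
  have hDnn : (0 : ℝ) ≤ ‖y - c‖ := norm_nonneg _
  have hcnn : (0 : ℝ) ≤ ‖c‖ := norm_nonneg _
  have hPD : P * ‖y - c‖ ≤ 2 * K₁ + s := by
    calc P * ‖y - c‖ ≤ P * (2 * r + s * Pinv) :=
          mul_le_mul_of_nonneg_left hD hPpos.le
      _ = 2 * (P * r) + s * (P * Pinv) := by ring
      _ = 2 * (P * r) + s := by rw [hPP, mul_one]
      _ ≤ 2 * K₁ + s := by linarith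
  have hDb : ‖y - c‖ ≤ 2 * a + s := by
    have h1 : s * Pinv ≤ s * 1 := mul_le_mul_of_nonneg_left hPinv_le hs
    rw [mul_one] at h1
    linarith
  have hy_norm : ‖y‖ ≤ ‖c‖ + ‖y - c‖ := by
    have e : c + (y - c) = y := by abel
    calc ‖y‖ = ‖c + (y - c)‖ := by rw [e]
      _ ≤ ‖c‖ + ‖y - c‖ := norm_add_le _ _
  have habs : |‖y‖ ^ 2 - ‖c‖ ^ 2| ≤ 2 * K := by
    have e0 : ‖y‖ ^ 2 - ‖c‖ ^ 2 = (‖y‖ - ‖c‖) * (‖y‖ + ‖c‖) := by ring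
    rw [e0, abs_mul, abs_of_nonneg (by positivity : (0 : ℝ) ≤ ‖y‖ + ‖c‖)]
    have e1 : |‖y‖ - ‖c‖| ≤ ‖y - c‖ := abs_norm_sub_norm_le y c
    have e2 : ‖y‖ + ‖c‖ ≤ ‖y - c‖ + 2 * ‖c‖ := by linarith
    have e3 : |‖y‖ - ‖c‖| * (‖y‖ + ‖c‖) ≤ ‖y - c‖ * (‖y - c‖ + 2 * ‖c‖) :=
      mul_le_mul e1 e2 (by positivity) hDnn
    have e4 : ‖y - c‖ * ‖c‖ ≤ s * (2 * K₁ + s) := by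
      calc ‖y - c‖ * ‖c‖ ≤ ‖y - c‖ * (s * P) :=
            mul_le_mul_of_nonneg_left hcnorm hDnn
        _ = s * (P * ‖y - c‖) := by ring
        _ ≤ s * (2 * K₁ + s) := mul_le_mul_of_nonneg_left hPD hs
    have e5 : ‖y - c‖ * ‖y - c‖ ≤ (2 * a + s) ^ 2 := by
      calc ‖y - c‖ * ‖y - c‖ ≤ (2 * a + s) * (2 * a + s) :=
            mul_le_mul hDb hDb hDnn (by linarith)
        _ = (2 * a + s) ^ 2 := by ring
    calc |‖y‖ - ‖c‖| * (‖y‖ + ‖c‖) ≤ ‖y - c‖ * (‖y - c‖ + 2 * ‖c‖) := e3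
      _ = ‖y - c‖ * ‖y - c‖ + 2 * (‖y - c‖ * ‖c‖) := by ring
      _ ≤ (2 * a + s) ^ 2 + 2 * (s * (2 * K₁ + s)) := by linarith
      _ = 2 * K := by rw [hK_def]; ring
  obtain ⟨hab1, hab2⟩ := abs_le.mp habs
  rw [← hc_def]
  constructor
  · rw [← Real.exp_add, Real.exp_le_exp]; linarith
  · rw [← Real.exp_add, Real.exp_le_exp]; linarith


end
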